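/- arXiv:0704.0537 — 6 statements merged into one kernel-verified Lean document; each statement's English description precedes it below -/
import Mathlib

section
/- If m and r are integers with m ≥ 2 and r ≥ 2, then there are no integers a₁,...,a₅ satisfying both a₁²+⋯+a₅² = m² + r and a₁+⋯+a₅ = 3m + r − 2. -/
/-- If `m ≥ 2` and `r ≥ 2` are integers, there are no integers `a₁,…,a₅` with
`∑ aᵢ² = m² + r` and `∑ aᵢ = 3m + r − 2`. -/
theorem stmt_0 (m r : ℤ) (hm : 2 ≤ m) (hr : 2 ≤ r) :
    ¬ ∃ a : Fin 5 → ℤ,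
      (∑ i, (a i) ^ 2 = m ^ 2 + r) ∧ (∑ i, a i = 3 * m + r - 2) := by
  rintro ⟨a, h1, h2⟩
  simp only [Fin.sum_univ_five] at h1 h2
  have key : (3 * m + r - 2) ^ 2 ≤ 5 * (m ^ 2 + r) := by
    rw [← h1, ← h2]
    nlinarith [sq_nonneg (a 0 - a 1), sq_nonneg (a 0 - a 2), sq_nonneg (a 0 - a 3),
      sq_nonneg (a 0 - a 4), sq_nonneg (a 1 - a 2), sq_nonneg (a 1 - a 3),
      sq_nonneg (a 1 - a 4), sq_nonneg (a 2 - a 3), sq_nonneg (a 2 - a 4),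
      sq_nonneg (a 3 - a 4)]
  nlinarith [sq_nonneg (m - 2), sq_nonneg (r - 2),
    mul_nonneg (sub_nonneg.2 hm) (sub_nonneg.2 hr)]
end

section
/- Let h₁:(x:y:z) ⇢ (μ·yz : xy : −xz) and h₂:(x:y:z) ⇢ (ν·yz(y−z) : xz(y+z) : xy(y+z)) be birational transformations of ℙ², with μ, ν ∈ ℂ*. Then h₁ and h₂ commute if and only if μ² = ν². -/
set_option maxHeartbeats 1000000
set_option synthInstance.maxHeartbeats 400000


noncomputable section

/-- The function field `ℂ(x,y)` of the plane. -/
abbrev Kfield := FractionRing (MvPolynomial (Fin 2) ℂ)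

/-- The inclusion of polynomials into `ℂ(x,y)`. -/
def ι : MvPolynomial (Fin 2) ℂ →+* Kfield := algebraMap _ _

/-- The first affine coordinate `x`. -/
def Xv : Kfield := ι (MvPolynomial.X 0)

/-- The second affine coordinate `y`. -/
def Yv : Kfield := ι (MvPolynomial.X 1)

open MvPolynomial

lemma ι_inj : Function.Injective ι := IsFractionRing.injective _ _

lemma ι_ne_zero {p : MvPolynomial (Fin 2) ℂ} (h : p ≠ 0) : ι p ≠ 0 := by
  intro h0; exact h (ι_inj (by simpa using h0))

lemma hX : Xv ≠ 0 := ι_ne_zero (by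
  intro h; have := congrArg (eval (fun _ => (1:ℂ))) h; simp at this)

lemma hY : Yv ≠ 0 := ι_ne_zero (by
  intro h; have := congrArg (eval (fun _ => (1:ℂ))) h; simp at this)

lemma hY1 : Yv + 1 ≠ 0 := by
  have e : Yv + 1 = ι (X 1 + 1) := by rw [ι.map_add, ι.map_one]; rfl
  rw [e]
  exact ι_ne_zero (by
    intro h; have := congrArg (eval (fun _ => (0:ℂ))) h; simp at this)

lemma hYm1 : Yv - 1 ≠ 0 := by
  have e : Yv - 1 = ι (X 1 - 1) := by rw [ι.map_sub, ι.map_one]; rfl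
  rw [e]
  exact ι_ne_zero (by
    intro h; have := congrArg (eval (fun _ => (0:ℂ))) h; simp at this)

lemma hC {c : ℂ} (hc : c ≠ 0) : ι (C c) ≠ 0 := ι_ne_zero (by simpa using hc)

lemma ext_lemma (f g : Kfield →+* Kfield)
    (hx : f Xv = g Xv) (hy : f Yv = g Yv)
    (hc : ∀ c : ℂ, f (ι (C c)) = g (ι (C c))) : f = g := by
  apply IsLocalization.ringHom_ext (nonZeroDivisors (MvPolynomial (Fin 2) ℂ))
  apply MvPolynomial.ringHom_ext
  · intro c; exact hc c
  · intro i
    fin_cases i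
    · exact hx
    · exact hy

/-- The birational maps `h₁:(x:y:z) ⇢ (μ·yz:xy:−xz)` and
`h₂:(x:y:z) ⇢ (ν·yz(y−z):xz(y+z):xy(y+z))` of `ℙ²` (with `μ,ν ∈ ℂ*`) correspond, in the
affine chart `z = 1`, to the `ℂ`-automorphisms `σ₁ : x ↦ −μy/x, y ↦ −y` and
`σ₂ : x ↦ ν(y−1)/(x(y+1)), y ↦ 1/y` of `ℂ(x,y)`.  They commute if and only if `μ² = ν²`. -/
theorem stmt_9 (μ ν : ℂ) (hμ : μ ≠ 0) (hν : ν ≠ 0) (σ₁ σ₂ : RingAut Kfield)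
    (hc₁ : ∀ c : ℂ, σ₁ (ι (MvPolynomial.C c)) = ι (MvPolynomial.C c))
    (hc₂ : ∀ c : ℂ, σ₂ (ι (MvPolynomial.C c)) = ι (MvPolynomial.C c))
    (h₁x : σ₁ Xv = -(ι (MvPolynomial.C μ) * Yv) / Xv) (h₁y : σ₁ Yv = -Yv)
    (h₂x : σ₂ Xv = ι (MvPolynomial.C ν) * (Yv - 1) / (Xv * (Yv + 1)))
    (h₂y : σ₂ Yv = Yv⁻¹) :
    Commute σ₁ σ₂ ↔ μ ^ 2 = ν ^ 2 := by
  set μ' := ι (C μ) with hμ'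
  set ν' := ι (C ν) with hν'
  have hμ0 : μ' ≠ 0 := hC hμ
  have hν0 : ν' ≠ 0 := hC hν
  have hX0 : Xv ≠ 0 := hX
  have hY0 : Yv ≠ 0 := hY
  have hY1' : Yv + 1 ≠ 0 := hY1
  have hYm1' : Yv - 1 ≠ 0 := hYm1
  have hB1 : μ' * Yv * (Yv - 1) ≠ 0 := mul_ne_zero (mul_ne_zero hμ0 hY) hYm1
  have hB2 : ν' * Yv * (Yv - 1) ≠ 0 := mul_ne_zero (mul_ne_zero hν0 hY) hYm1
  have key1 : σ₁ (σ₂ Xv) = -(ν' * (Yv + 1) * Xv) / (μ' * Yv * (Yv - 1)) := by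
    rw [h₂x, map_div₀, map_mul, map_mul, map_sub, map_add, map_one, hc₁, h₁x, h₁y]
    have hA : -(μ' * Yv) / Xv * (-Yv + 1) ≠ 0 := by
      apply mul_ne_zero
      · apply div_ne_zero _ hX
        simpa using mul_ne_zero hμ0 hY
      · have e1 : (-Yv + 1) = -(Yv - 1) := by ring
        rw [e1]
        exact neg_ne_zero.mpr hYm1
    rw [div_eq_div_iff hA hB1]
    field_simp
    ring
  have key2 : σ₂ (σ₁ Xv) = -(μ' * (Yv + 1) * Xv) / (ν' * Yv * (Yv - 1)) := by
    rw [h₁x, map_div₀, map_neg, map_mul, hc₂, h₂x, h₂y]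
    have hA : ν' * (Yv - 1) / (Xv * (Yv + 1)) ≠ 0 :=
      div_ne_zero (mul_ne_zero hν0 hYm1) (mul_ne_zero hX hY1)
    rw [div_eq_div_iff hA hB2]
    field_simp
    ring
  constructor
  · intro hcomm
    have h : σ₁ (σ₂ Xv) = σ₂ (σ₁ Xv) := congrArg (fun f : RingAut Kfield => f Xv) hcomm
    rw [key1, key2, div_eq_div_iff hB1 hB2] at h
    have h2 : (ν' * ν' - μ' * μ') * ((Yv + 1) * Xv * (Yv * (Yv - 1))) = 0 := by
      linear_combination -h
    have h3 : ν' * ν' = μ' * μ' := by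
      rcases mul_eq_zero.1 h2 with h3 | h3
      · exact sub_eq_zero.mp h3
      · exact absurd h3 (mul_ne_zero (mul_ne_zero hY1 hX) (mul_ne_zero hY hYm1))
    have h4 : ι (C (μ ^ 2)) = ι (C (ν ^ 2)) := by
      rw [C_pow, C_pow, ι.map_pow, ι.map_pow, sq, sq, ← hμ', ← hν', h3]
    exact C_injective _ _ (ι_inj h4)
  · intro heq
    have hμν : μ' * μ' = ν' * ν' := by
      rw [hμ', hν', ← ι.map_mul, ← ι.map_mul, ← C_mul, ← C_mul, ← sq, ← sq, heq]
    have key : (σ₁ * σ₂ : RingAut Kfield) = σ₂ * σ₁ := by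
      have hh := ext_lemma ((σ₁ * σ₂ : RingAut Kfield) : Kfield →+* Kfield)
        ((σ₂ * σ₁ : RingAut Kfield) : Kfield →+* Kfield) ?_ ?_ ?_
      · ext a
        exact congrArg (fun f : Kfield →+* Kfield => f a) hh
      · show σ₁ (σ₂ Xv) = σ₂ (σ₁ Xv)
        rw [key1, key2, div_eq_div_iff hB1 hB2]
        linear_combination ((Yv + 1) * Xv * Yv * (Yv - 1)) * hμν
      · show σ₁ (σ₂ Yv) = σ₂ (σ₁ Yv)
        rw [h₂y, h₁y, map_inv₀, h₁y, map_neg, h₂y]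
        exact inv_neg (a := Yv)
      · intro c
        show σ₁ (σ₂ (ι (C c))) = σ₂ (σ₁ (ι (C c)))
        rw [hc₂, hc₁, hc₂]
    exact key


end
end

section
/- Let S₆ = {((x:y:z),(u:v:w)) ∈ ℙ²×ℙ² : ux = vy = wz}. The map κ_{α,β}: ((x:y:z),(u:v:w)) ↦ ((u:αw:βv),(x:α⁻¹z:β⁻¹y)) is an automorphism of S₆ for all α,β ∈ ℂ*, its square is ((x:y:z),(u:v:w)) ↦ ((x:αβ⁻¹y:α⁻¹βz),(u:α⁻¹βv:αβ⁻¹w)), and κ_{α,β} is an involution if and only if α = β. -/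
noncomputable section

/-- A pair of nonzero vectors `(p,q)` represents a point of the del Pezzo surface
`S₆ = {((x:y:z),(u:v:w)) ∈ ℙ²×ℙ² : ux = vy = wz}` iff `p₀q₀ = p₁q₁ = p₂q₂`. -/
def S6cond (p q : Fin 3 → ℂ) : Prop :=
  p 0 * q 0 = p 1 * q 1 ∧ p 1 * q 1 = p 2 * q 2

/-- First component of `κ_{α,β} : ((x:y:z),(u:v:w)) ↦ ((u:αw:βv),(x:α⁻¹z:β⁻¹y))`. -/
def kap1 (α β : ℂ) (p q : Fin 3 → ℂ) : Fin 3 → ℂ := ![q 0, α * q 2, β * q 1]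

/-- Second component of `κ_{α,β}`. -/
def kap2 (α β : ℂ) (p q : Fin 3 → ℂ) : Fin 3 → ℂ := ![p 0, α⁻¹ * p 2, β⁻¹ * p 1]


lemma vne3 (v : Fin 3 → ℂ) (h : v ≠ 0) : v 0 ≠ 0 ∨ v 1 ≠ 0 ∨ v 2 ≠ 0 := by
  by_contra hc
  push_neg at hc
  apply h
  funext i
  fin_cases i <;> simp [hc.1, hc.2.1, hc.2.2]

lemma vne3' {v : Fin 3 → ℂ} {k : Fin 3} (h : v k ≠ 0) : v ≠ 0 := by
  intro h0; apply h; rw [h0]; rfl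

/-- `κ_{α,β}` is an automorphism of `S₆` (it maps `S₆` onto `S₆`), its square is
`((x:y:z),(u:v:w)) ↦ ((x:αβ⁻¹y:α⁻¹βz),(u:α⁻¹βv:αβ⁻¹w))`, and it is an involution
if and only if `α = β`. -/
theorem stmt_12 (α β : ℂ) (hα : α ≠ 0) (hβ : β ≠ 0) :
    -- κ maps S₆ into S₆
    (∀ p q : Fin 3 → ℂ, p ≠ 0 → q ≠ 0 → S6cond p q →
      kap1 α β p q ≠ 0 ∧ kap2 α β p q ≠ 0 ∧ S6cond (kap1 α β p q) (kap2 α β p q)) ∧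
    -- κ is surjective on S₆ (up to scalars), hence an automorphism of S₆
    (∀ p q : Fin 3 → ℂ, p ≠ 0 → q ≠ 0 → S6cond p q →
      ∃ p' q' : Fin 3 → ℂ, p' ≠ 0 ∧ q' ≠ 0 ∧ S6cond p' q' ∧
        (∃ lam : ℂ, lam ≠ 0 ∧ kap1 α β p' q' = lam • p) ∧
        (∃ mu : ℂ, mu ≠ 0 ∧ kap2 α β p' q' = mu • q)) ∧
    -- the formula for κ²
    (∀ p q : Fin 3 → ℂ,
      kap1 α β (kap1 α β p q) (kap2 α β p q) = ![p 0, α * β⁻¹ * p 1, α⁻¹ * β * p 2] ∧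
      kap2 α β (kap1 α β p q) (kap2 α β p q) = ![q 0, α⁻¹ * β * q 1, α * β⁻¹ * q 2]) ∧
    -- κ is an involution (κ² = id on S₆ and κ ≠ id on S₆) iff α = β
    (((∀ p q : Fin 3 → ℂ, p ≠ 0 → q ≠ 0 → S6cond p q →
        (∃ lam : ℂ, lam ≠ 0 ∧ kap1 α β (kap1 α β p q) (kap2 α β p q) = lam • p) ∧
        (∃ mu : ℂ, mu ≠ 0 ∧ kap2 α β (kap1 α β p q) (kap2 α β p q) = mu • q)) ∧
      ¬ (∀ p q : Fin 3 → ℂ, p ≠ 0 → q ≠ 0 → S6cond p q →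
        (∃ lam : ℂ, lam ≠ 0 ∧ kap1 α β p q = lam • p) ∧
        (∃ mu : ℂ, mu ≠ 0 ∧ kap2 α β p q = mu • q))) ↔ α = β) := by

  refine ⟨?_, ?_, ?_, ?_⟩
  · intro p q hp hq hS
    refine ⟨?_, ?_, ?_⟩
    · rcases vne3 q hq with h | h | h
      · exact vne3' (k := 0) (by simp [kap1, h])
      · exact vne3' (k := 2) (by simp [kap1, hβ, h])
      · exact vne3' (k := 1) (by simp [kap1, hα, h])
    · rcases vne3 p hp with h | h | h
      · exact vne3' (k := 0) (by simp [kap2, h])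
      · exact vne3' (k := 2) (by simp [kap2, hβ, h])
      · exact vne3' (k := 1) (by simp [kap2, hα, h])
    · obtain ⟨h1, h2⟩ := hS
      constructor
      · simp [kap1, kap2, S6cond]; field_simp; linear_combination h1 + h2
      · simp [kap1, kap2, S6cond]; field_simp; linear_combination -h2
  · intro p q hp hq hS
    refine ⟨![q 0, β * q 2, α * q 1], ![p 0, β⁻¹ * p 2, α⁻¹ * p 1], ?_, ?_, ?_, ?_, ?_⟩
    · rcases vne3 q hq with h | h | h
      · exact vne3' (k := 0) (by simp [h])
      · exact vne3' (k := 2) (by simp [hα, h])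
      · exact vne3' (k := 1) (by simp [hβ, h])
    · rcases vne3 p hp with h | h | h
      · exact vne3' (k := 0) (by simp [h])
      · exact vne3' (k := 2) (by simp [hα, h])
      · exact vne3' (k := 1) (by simp [hβ, h])
    · obtain ⟨h1, h2⟩ := hS
      constructor
      · simp [S6cond]; field_simp; linear_combination h1 + h2
      · simp [S6cond]; field_simp; linear_combination -h2
    · refine ⟨1, one_ne_zero, ?_⟩
      funext i
      fin_cases i <;> simp [kap1, hα, hβ]
    · refine ⟨1, one_ne_zero, ?_⟩
      funext i
      fin_cases i <;> simp [kap2, hα, hβ]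
  · intro p q
    constructor <;> funext i <;> fin_cases i <;> simp [kap1, kap2] <;> ring
  · constructor
    · rintro ⟨h2, _⟩
      have hS : S6cond ![1,1,1] ![1,1,1] := by constructor <;> simp
      obtain ⟨⟨lam, hlam, hl⟩, _⟩ := h2 ![1,1,1] ![1,1,1]
        (vne3' (k := 0) (by simp)) (vne3' (k := 0) (by simp)) hS
      have e0 := congrFun hl 0
      have e1 := congrFun hl 1
      simp [kap1, kap2] at e0 e1
      rw [← e0] at e1
      field_simp at e1
      exact e1
    · intro hab
      subst hab
      constructor
      · intro p q hp hq hS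
        constructor
        · refine ⟨1, one_ne_zero, ?_⟩
          funext i
          fin_cases i <;> simp [kap1, kap2, hα]
        · refine ⟨1, one_ne_zero, ?_⟩
          funext i
          fin_cases i <;> simp [kap1, kap2, hα]
      · intro h
        have hS : S6cond ![1,0,0] ![0,1,0] := by constructor <;> simp
        obtain ⟨⟨lam, hlam, hl⟩, _⟩ := h ![1,0,0] ![0,1,0]
          (vne3' (k := 0) (by simp)) (vne3' (k := 1) (by simp)) hS
        have e2 := congrFun hl 2
        simp [kap1] at e2
        exact hα e2


end
end

section
/- Let g ∈ Aut(S,π) be an automorphism of finite order of a conic bundle (S,π) whose action on the base ℙ¹ has even order n, and suppose gⁿ is an involution acting trivially on the base twisting exactly 2k > 0 singular fibres, none of which is twisted by g, while g twists r ∈ {1,2} singular fibres. Then n divides 2k, and 2k/n ≡ r (mod 2). -/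
private lemma stmt_13_dvd {β : Type*} [Fintype β] (n : ℕ) (hn0 : 0 < n) (hne : Nonempty β)
    (σ : Equiv.Perm β) (hσn : σ ^ n = 1)
    (hfree : ∀ j : ℕ, 0 < j → j < n → ∀ x, (σ ^ j) x ≠ x) :
    n ∣ Fintype.card β := by
  classical
  obtain ⟨x0⟩ := hne
  have horder : orderOf σ = n := by
    rw [orderOf_eq_iff hn0]
    refine ⟨hσn, fun m hm hm0 hcon => hfree m hm0 hm x0 ?_⟩
    rw [hcon]; rfl
  set G := Subgroup.zpowers σ with hG
  have hstab : ∀ x : β, MulAction.stabilizer G x = ⊥ := by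
    intro x
    rw [Subgroup.eq_bot_iff_forall]
    rintro ⟨g, hg⟩ hgx
    obtain ⟨j, rfl⟩ := Subgroup.mem_zpowers_iff.mp hg
    have hmod : σ ^ (j % (n : ℤ)) = σ ^ j := by
      rw [← horder, zpow_mod_orderOf]
    set m := (j % (n : ℤ)).toNat with hm
    have hj0 : 0 ≤ j % (n : ℤ) := Int.emod_nonneg j (by exact_mod_cast hn0.ne')
    have hjlt : j % (n : ℤ) < n := Int.emod_lt_of_pos j (by exact_mod_cast hn0)
    have hpow : σ ^ m = σ ^ j := by
      rw [← hmod, hm, ← zpow_natCast, Int.toNat_of_nonneg hj0]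
    have hmlt : m < n := by omega
    have hgx' : (σ ^ j) x = x := hgx
    have hm0 : m = 0 := by
      by_contra hm0
      exact hfree m (Nat.pos_of_ne_zero hm0) hmlt x (by rw [hpow]; exact hgx')
    have : σ ^ j = 1 := by rw [← hpow, hm0, pow_zero]
    exact Subtype.ext this
  have hcard := MulAction.card_eq_sum_card_group_div_card_stabilizer G β
  have hbot : ∀ x : β, Fintype.card (MulAction.stabilizer G x) = 1 := by
    intro x
    exact Fintype.card_eq_one_iff.2 ⟨⟨1, (MulAction.stabilizer G x).one_mem⟩,
      fun y => Subtype.ext (Subgroup.mem_bot.1 (hstab x ▸ y.2))⟩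
  simp only [hbot, Nat.div_one] at hcard
  rw [Finset.sum_const, Fintype.card_zpowers, horder, smul_eq_mul] at hcard
  exact ⟨Finset.univ.card, by rw [hcard, mul_comm]⟩

private lemma stmt_13_parity {Pic : Type*} [AddCommGroup Pic]
    (n t r : ℕ)
    (B : Pic →+ Pic →+ ℤ)
    (φ : AddAut Pic)
    (f s K : Pic) (m : ℤ)
    (F : Fin t → Pic) (L : Fin r → Pic)
    (hφf : φ f = f)
    (hφL : ∀ i, φ (L i) = f - L i)
    (hφF : ∀ i, (n • φ) (F i) = f - F i)
    (hK : K = (m - 2) • f - (2 : ℤ) • s +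
      ((∑ i, ∑ j ∈ Finset.range n, (j • φ) (F i)) + ∑ i, L i))
    (hφK : φ K = K)
    (hBsf : B s f = 1) :
    t % 2 = r % 2 := by
  classical
  set O : Pic := ∑ i, ∑ j ∈ Finset.range n, (j • φ) (F i) with hO
  set Fs : Pic := ∑ i, F i with hFs
  set Ls : Pic := ∑ i, L i with hLs
  have shift : ∀ x : Pic, (∑ j ∈ Finset.range n, ((j + 1) • φ) x)
      = (∑ j ∈ Finset.range n, (j • φ) x) + (n • φ) x - x := by
    intro x
    have h1 := Finset.sum_range_succ' (fun j => (j • φ) x) n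
    have h2 := Finset.sum_range_succ (fun j => (j • φ) x) n
    simp only [zero_nsmul, AddAut.zero_apply] at h1
    rw [h2] at h1
    rw [eq_sub_iff_add_eq]
    exact h1.symm
  have hφO : φ O = O + (t : ℤ) • f - (2 : ℤ) • Fs := by
    have ha : φ O = ∑ i, ∑ j ∈ Finset.range n, ((j + 1) • φ) (F i) := by
      rw [hO, map_sum]
      refine Finset.sum_congr rfl fun i _ => ?_
      rw [map_sum]
      refine Finset.sum_congr rfl fun j _ => ?_
      rw [← AddAut.add_apply, ← succ_nsmul']
    have hb : ∀ i, ∑ j ∈ Finset.range n, ((j + 1) • φ) (F i)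
        = ((∑ j ∈ Finset.range n, (j • φ) (F i)) + f) - (2 : ℤ) • F i := by
      intro i
      rw [shift, hφF i]
      have : ((2 : ℤ) • F i : Pic) = F i + F i := by
        rw [two_smul]
      rw [this]
      abel
    rw [ha, Finset.sum_congr rfl fun i _ => hb i, Finset.sum_sub_distrib,
      Finset.sum_add_distrib, Finset.sum_const, Finset.card_univ, Fintype.card_fin,
      ← Finset.smul_sum, ← hO, ← hFs]
    rw [natCast_zsmul]
  have hφLs : φ Ls = (r : ℤ) • f - Ls := by
    rw [hLs, map_sum, Finset.sum_congr rfl fun i _ => hφL i, Finset.sum_sub_distrib,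
      Finset.sum_const, Finset.card_univ, Fintype.card_fin, ← hLs, natCast_zsmul]
  have e1 : φ K = (m - 2) • f - (2 : ℤ) • (φ s) +
      ((O + (t : ℤ) • f - (2 : ℤ) • Fs) + ((r : ℤ) • f - Ls)) := by
    rw [hK]
    rw [map_add, map_sub, map_zsmul, map_zsmul, map_add, hφf, hφO, hφLs]
  have e2 : (m - 2) • f - (2 : ℤ) • (φ s) +
      ((O + (t : ℤ) • f - (2 : ℤ) • Fs) + ((r : ℤ) • f - Ls))
      = (m - 2) • f - (2 : ℤ) • s + (O + Ls) := by
    rw [← e1, hφK, hK]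
  have e3 := congrArg (B s) e2
  simp only [map_add, map_sub, map_zsmul, hBsf, smul_eq_mul] at e3
  omega

/-- Let `g` be a finite-order automorphism of a conic bundle `(S,π)` acting with even order
`n` on the base, such that `gⁿ` is an involution acting trivially on the base which twists
exactly `2k > 0` singular fibres (none of them twisted by `g`), while `g` itself twists
`r ∈ {1,2}` singular fibres.  Then `n ∣ 2k` and `2k/n ≡ r (mod 2)`.

The geometric situation is encoded by its combinatorial and Picard-theoretic data, exactly
as used in the proof: the cyclic group generated by the action `σ` of `g` on the set of the
`2k` fibres twisted by `gⁿ` acts freely with `σⁿ = 1`; on `Pic S` (with intersection form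
`B`), the action `φ` of `g` fixes the fibre class `f` and the canonical class `K`, sends each
component `Lᵢ` of a fibre twisted by `g` to `f − Lᵢ`, sends the chosen components `Fᵢ` of a
set of `⟨g⟩`-orbit representatives of the fibres twisted by `gⁿ` to `f − Fᵢ` under `φⁿ`, and
`K = (m−2)f − 2s + R` where `s` is (the class of) a section with `B s f = 1` and `R` is the
sum of all these components. -/
theorem stmt_13 {Pic : Type*} [AddCommGroup Pic]
    (n k r : ℕ) (hn : Even n) (hn0 : 0 < n) (hk : 0 < k) (hr : r = 1 ∨ r = 2)
    (σ : Equiv.Perm (Fin (2 * k)))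
    (hσn : σ ^ n = 1)
    (hfree : ∀ j : ℕ, 0 < j → j < n → ∀ x, (σ ^ j) x ≠ x)
    (B : Pic →+ Pic →+ ℤ)
    (φ : AddAut Pic)
    (f s K : Pic) (m : ℤ)
    (F : Fin (2 * k / n) → Pic) (L : Fin r → Pic)
    (hφf : φ f = f)
    (hφL : ∀ i, φ (L i) = f - L i)
    (hφF : ∀ i, (n • φ) (F i) = f - F i)
    (hK : K = (m - 2) • f - (2 : ℤ) • s +
      ((∑ i, ∑ j ∈ Finset.range n, (j • φ) (F i)) + ∑ i, L i))
    (hφK : φ K = K)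
    (hBsf : B s f = 1) :
    (n ∣ 2 * k) ∧ (2 * k / n) % 2 = r % 2 := by
  have hdvd : n ∣ 2 * k := by
    have := stmt_13_dvd n hn0 ⟨⟨0, by omega⟩⟩ σ hσn hfree
    simpa using this
  exact ⟨hdvd, stmt_13_parity n (2 * k / n) r B φ f s K m F L hφf hφL hφF hK hφK hBsf⟩
end

section
/- Let (S,π) be a conic bundle, not isomorphic to a Hirzebruch surface (i.e., π has at least one singular fibre), let −n be the minimal self-intersection of sections of π, and let r be the number of singular fibres. If there exist two distinct sections of π with self-intersection −n, then r ≥ 2n. -/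
/-- Let `(S,π)` be a conic bundle which is not a Hirzebruch surface (so `π` has `r ≥ 1`
singular fibres), let `−n` be the minimal self-intersection of sections of `π`, and suppose
there are two distinct sections of self-intersection `−n`.  Then `r ≥ 2n`.

The geometry is encoded by its Picard-theoretic data, as used in the proof: `Pic S` is
generated by a minimal section `s`, the fibre class `f` and the components `F₁,…,F_r` of the
singular fibres, with the standard intersection numbers, canonical class
`K = −(n+2)f − 2s + ΣFᵢ`; every class `t` of a section satisfies `t·f = 1`, the adjunction
relation `t·(t+K) = −2`, the minimality bound `t·t ≥ −n`, and has non-negative intersection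
with the `Fᵢ` and with any other section. -/
theorem stmt_14 {Pic : Type*} [AddCommGroup Pic]
    (n : ℤ) (r : ℕ) (hr : 0 < r)
    (B : Pic →+ Pic →+ ℤ)
    (hBsymm : ∀ x y, B x y = B y x)
    (s f K : Pic) (F : Fin r → Pic)
    (hspan : Submodule.span ℤ (Set.range F ∪ {s, f}) = ⊤)
    (hss : B s s = -n) (hsf : B s f = 1) (hff : B f f = 0)
    (hFF : ∀ i j, B (F i) (F j) = if i = j then -1 else 0)
    (hfF : ∀ i, B f (F i) = 0) (hsF : ∀ i, B s (F i) = 0)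
    (hK : K = -((n + 2) • f) - (2 : ℤ) • s + ∑ i, F i)
    (sections : Set Pic)
    (hs : s ∈ sections)
    (hmin : ∀ t ∈ sections, -n ≤ B t t)
    (hsecf : ∀ t ∈ sections, B t f = 1)
    (hadj : ∀ t ∈ sections, B t (t + K) = -2)
    (hpos : ∀ t ∈ sections, ∀ t' ∈ sections, t ≠ t' → 0 ≤ B t t')
    (hposF : ∀ t ∈ sections, ∀ i, 0 ≤ B t (F i))
    (hex : ∃ t ∈ sections, t ≠ s ∧ B t t = -n) :
    2 * n ≤ (r : ℤ) := by
  obtain ⟨t, htmem, hts, htt⟩ := hex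
  set a : Fin r → ℤ := fun i => B t (F i) with ha
  set β : ℤ := B t s + n with hβ
  have htf : B t f = 1 := hsecf t htmem
  -- value of B t K
  have htK : B t K = -(n + 2) - 2 * B t s + ∑ i, a i := by
    rw [hK]
    simp [map_sub, map_add, map_neg, map_zsmul, map_sum, htf, ha]
  -- adjunction gives sum of a i
  have hsum : ∑ i, a i = 2 * β := by
    have := hadj t htmem
    rw [map_add, htt, htK] at this
    rw [hβ]; linarith
  -- the auxiliary class
  set v : Pic := t - s - β • f + ∑ i, a i • F i with hv
  have hBv : ∀ x, B v x = B t x - B s x - β * B f x + ∑ i, a i * B (F i) x := by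
    intro x
    simp [hv, map_sub, map_add, map_zsmul, map_sum]
  have hker : ∀ y, B v y = 0 := by
    have hle : Submodule.span ℤ (Set.range F ∪ {s, f} : Set Pic) ≤
        LinearMap.ker (B v).toIntLinearMap := by
      rw [Submodule.span_le]
      rintro x (⟨i, rfl⟩ | hx)
      · simp only [SetLike.mem_coe, LinearMap.mem_ker, AddMonoidHom.coe_toIntLinearMap]
        rw [hBv]
        have h1 : B s (F i) = 0 := hsF i
        have h2 : B f (F i) = 0 := hfF i
        have h3 : ∑ j, a j * B (F j) (F i) = -a i := by
          simp [hFF]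
        rw [h1, h2, h3]; ring
      · simp only [Set.mem_insert_iff, Set.mem_singleton_iff] at hx
        rcases hx with h | h
        · rw [h]
          simp only [SetLike.mem_coe, LinearMap.mem_ker, AddMonoidHom.coe_toIntLinearMap]
          rw [hBv]
          have h3 : ∑ j, a j * B (F j) s = 0 := by
            simp [fun j => hBsymm (F j) s, hsF]
          have h4 : B t s = β - n := by rw [hβ]; ring
          rw [h3, hss, hBsymm f s, hsf, h4]; ring
        · rw [h]
          simp only [SetLike.mem_coe, LinearMap.mem_ker, AddMonoidHom.coe_toIntLinearMap]
          rw [hBv]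
          have h3 : ∑ j, a j * B (F j) f = 0 := by
            simp [fun j => hBsymm (F j) f, hfF]
          rw [h3, htf, hsf, hff]; ring
    intro y
    have : y ∈ LinearMap.ker (B v).toIntLinearMap := hle (hspan ▸ Submodule.mem_top)
    exact this
  -- pairing v with t gives the sum of squares
  have hsq : ∑ i, a i * a i = 2 * β := by
    have h0 := hker t
    rw [hBv t] at h0
    have h1 : B s t = β - n := by rw [← hBsymm t s, hβ]; ring
    have h2 : B f t = 1 := by rw [← hBsymm t f, htf]
    simp only [fun i => hBsymm (F i) t] at h0
    rw [htt, h1, h2] at h0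
    have he : ∑ x, a x * B t (F x) = ∑ x, a x * a x := rfl
    rw [he] at h0
    linarith
  -- each a i is 0 or 1
  have hnn : ∀ i, 0 ≤ a i := fun i => hposF t htmem i
  have hzero : ∑ i ∈ Finset.univ, (a i * a i - a i) = 0 := by
    rw [Finset.sum_sub_distrib, hsq, hsum]; ring
  have hle1 : ∀ i, a i ≤ 1 := by
    intro i
    have heach := (Finset.sum_eq_zero_iff_of_nonneg (fun j _ => by nlinarith [hnn j] : ∀ j ∈ Finset.univ, 0 ≤ a j * a j - a j)).mp hzero i (Finset.mem_univ i)
    nlinarith [hnn i]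
  have hsumle : ∑ i, a i ≤ (r : ℤ) := by
    calc ∑ i, a i ≤ ∑ _i : Fin r, (1 : ℤ) := Finset.sum_le_sum (fun i _ => hle1 i)
    _ = (r : ℤ) := by simp
  have hBts : 0 ≤ B t s := hpos t htmem s hs hts
  omega
end

section
/- Let S be a del Pezzo surface of degree d = 9 − r obtained by blowing up r points of ℙ² in general position (1 ≤ r ≤ 8), and let G ⊂ Aut(S) be a group with Pic(S)^G of rank 1. Then the size of every finite G-orbit on the set of (−1)-curves of S is divisible by d. -/
/-- Let `S` be a del Pezzo surface of degree `d = 9 − r` obtained by blowing up `r` points of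
`ℙ²` in general position (`1 ≤ r ≤ 8`), and let `G ⊂ Aut(S)` with `rk Pic(S)^G = 1`.  Then
the size of every finite `G`-orbit on the set of `(−1)`-curves of `S` is divisible by `d`.

The geometry is encoded by its Picard-theoretic data: the intersection form `B` on `Pic S`
with canonical class `K` satisfying `K·K = d`; the action `ρ` of `G` on `Pic S` preserves `B`;
`rk Pic(S)^G = 1` is expressed (using that `K` is primitive) by saying every `G`-invariant
class is an integral multiple of `K`; a finite orbit `O` of `(−1)`-curves consists of classes
`D` with `D·D = D·K = −1`, is `G`-stable, and `G` acts transitively on it. -/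
theorem stmt_15 {Pic : Type*} [AddCommGroup Pic] [DecidableEq Pic]
    (r d : ℕ) (hr1 : 1 ≤ r) (hr8 : r ≤ 8) (hd : (d : ℤ) = 9 - (r : ℤ))
    (B : Pic →+ Pic →+ ℤ) (hBsymm : ∀ x y, B x y = B y x)
    (K : Pic) (hK : B K K = (d : ℤ))
    {G : Type*} [Group G] (ρ : G →* Multiplicative (AddAut Pic))
    (hBinv : ∀ (g : G) (x y : Pic), B (Multiplicative.toAdd (ρ g) x) (Multiplicative.toAdd (ρ g) y) = B x y)
    (hrk1 : ∀ x : Pic, (∀ g : G, Multiplicative.toAdd (ρ g) x = x) → ∃ a : ℤ, x = a • K)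
    (O : Finset Pic)
    (hexc : ∀ D ∈ O, B D D = -1 ∧ B D K = -1)
    (hstab : ∀ g : G, O.image (fun D => Multiplicative.toAdd (ρ g) D) = O)
    (htrans : ∀ D ∈ O, ∀ D' ∈ O, ∃ g : G, Multiplicative.toAdd (ρ g) D = D') :
    (d : ℤ) ∣ (O.card : ℤ) := by
  set Sum : Pic := ∑ D ∈ O, D with hSum
  have hinv : ∀ g : G, Multiplicative.toAdd (ρ g) Sum = Sum := by
    intro g
    have hmap : Multiplicative.toAdd (ρ g) Sum = ∑ D ∈ O, Multiplicative.toAdd (ρ g) D := map_sum (Multiplicative.toAdd (ρ g)) _ _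
    rw [hmap]
    calc ∑ D ∈ O, Multiplicative.toAdd (ρ g) D = ∑ D ∈ O.image (fun D => Multiplicative.toAdd (ρ g) D), D := by
          rw [Finset.sum_image (fun a _ b _ h => (Multiplicative.toAdd (ρ g)).injective h)]
      _ = Sum := by rw [hstab g]
  obtain ⟨a, ha⟩ := hrk1 Sum hinv
  have h1 : B Sum K = -(O.card : ℤ) := by
    rw [hSum, map_sum, AddMonoidHom.finset_sum_apply,
      Finset.sum_congr rfl (fun D hD => (hexc D hD).2)]
    simp
  have h2 : B Sum K = a * (d : ℤ) := by
    rw [ha]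
    simp [hK, Int.cast_smul_eq_zsmul]
  refine ⟨-a, ?_⟩
  have := h1.symm.trans h2
  linarith
end
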